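/- Let α, β be real numbers with 0 ≤ α ≤ β and let f : [0,1] → ℝ be continuous. There exists a constant c > 0 (depending only on α and β) such that for every natural number n ≥ 1 and every x ∈ [0,1], |B_n^{α,β}(f;x) − f(x)| ≤ c · ω(f; n^{−1/2}), where ω(f; δ) = sup{ |f(x₁) − f(x₂)| : x₁, x₂ ∈ [0,1], |x₁ − x₂| ≤ δ } is the modulus of continuity of f. -/

import Mathlib

/-- Bernstein basis polynomial `b_{n,k}(x) = (n choose k) x^k (1-x)^(n-k)`. -/
noncomputable def bernsteinBasis (n k : ℕ) (x : ℝ) : ℝ :=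
  (n.choose k : ℝ) * x ^ k * (1 - x) ^ (n - k)

/-- Bernstein-Stancu operator `B_n^{α,β}(f;x)`. -/
noncomputable def bernsteinStancu (n : ℕ) (α β : ℝ) (f : ℝ → ℝ) (x : ℝ) : ℝ :=
  ∑ k ∈ Finset.range (n + 1), bernsteinBasis n k x * f (((k : ℝ) + α) / ((n : ℝ) + β))

/-- Modulus of continuity of `f` on `[0,1]`:
`ω(f;δ) = sup { |f x₁ - f x₂| : x₁, x₂ ∈ [0,1], |x₁ - x₂| ≤ δ }`. -/
noncomputable def modulusOfContinuity (f : ℝ → ℝ) (δ : ℝ) : ℝ :=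
  sSup {d : ℝ | ∃ x₁ ∈ Set.Icc (0 : ℝ) 1, ∃ x₂ ∈ Set.Icc (0 : ℝ) 1,
    |x₁ - x₂| ≤ δ ∧ d = |f x₁ - f x₂|}

open Finset

lemma bb_sum (n : ℕ) (x : ℝ) : ∑ k ∈ range (n+1), bernsteinBasis n k x = 1 := by
  have := congrArg (Polynomial.eval x) (bernsteinPolynomial.sum ℝ n)
  simpa [bernsteinBasis, bernsteinPolynomial, Polynomial.eval_finset_sum] using this

lemma bb_var (n : ℕ) (x : ℝ) :
    ∑ k ∈ range (n+1), bernsteinBasis n k x * ((k:ℝ) - n*x)^2 = n * x * (1-x) := by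
  have := congrArg (Polynomial.eval x) (bernsteinPolynomial.variance ℝ n)
  simp only [Polynomial.eval_finset_sum, Polynomial.eval_mul, Polynomial.eval_pow,
    Polynomial.eval_sub, Polynomial.eval_smul, Polynomial.eval_natCast, Polynomial.eval_X,
    Polynomial.eval_one, smul_eq_mul, nsmul_eq_mul] at this
  calc ∑ k ∈ range (n+1), bernsteinBasis n k x * ((k:ℝ) - n*x)^2
      = ∑ k ∈ range (n+1), ((n:ℝ)*x - k)^2 * ((n.choose k : ℝ) * x ^ k * (1 - x) ^ (n - k)) := by
        apply Finset.sum_congr rfl; intro k _; simp [bernsteinBasis]; ring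
    _ = n * x * (1-x) := by rw [← this]; simp [bernsteinPolynomial]

lemma bb_nonneg (n k : ℕ) {x : ℝ} (hx : x ∈ Set.Icc (0:ℝ) 1) : 0 ≤ bernsteinBasis n k x := by
  have h1 : (0:ℝ) ≤ x := hx.1
  have h2 : (0:ℝ) ≤ 1 - x := by linarith [hx.2]
  unfold bernsteinBasis; positivity

lemma moc_pair (f : ℝ → ℝ) (hf : ContinuousOn f (Set.Icc 0 1)) {δ : ℝ}
    {a b : ℝ} (ha : a ∈ Set.Icc (0:ℝ) 1) (hb : b ∈ Set.Icc (0:ℝ) 1) (hab : |a - b| ≤ δ) :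
    |f a - f b| ≤ modulusOfContinuity f δ := by
  obtain ⟨C, hC⟩ := (isCompact_Icc).exists_bound_of_continuousOn hf
  apply le_csSup
  · refine ⟨2*C, ?_⟩
    rintro d ⟨x₁, h₁, x₂, h₂, -, rfl⟩
    calc |f x₁ - f x₂| ≤ ‖f x₁‖ + ‖f x₂‖ := by
          simpa using norm_sub_le (f x₁) (f x₂)
    _ ≤ 2*C := by have := hC x₁ h₁; have := hC x₂ h₂; linarith
  · exact ⟨a, ha, b, hb, hab, rfl⟩

lemma moc_nonneg (f : ℝ → ℝ) (hf : ContinuousOn f (Set.Icc 0 1)) {δ : ℝ} (hδ : 0 ≤ δ) :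
    0 ≤ modulusOfContinuity f δ := by
  have := moc_pair f hf (a := 0) (b := 0) (by norm_num) (by norm_num) (by simpa using hδ)
  simpa using this

lemma moc_key (f : ℝ → ℝ) (hf : ContinuousOn f (Set.Icc 0 1)) {δ : ℝ} (hδ : 0 < δ)
    {x t : ℝ} (hx : x ∈ Set.Icc (0:ℝ) 1) (ht : t ∈ Set.Icc (0:ℝ) 1) :
    |f t - f x| ≤ (1 + ((t - x)/δ)^2) * modulusOfContinuity f δ := by
  set a : ℝ := |t - x| / δ with ha
  have ha0 : 0 ≤ a := by positivity
  set m : ℕ := max 1 ⌈a⌉₊ with hm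
  have hm1 : 1 ≤ m := le_max_left _ _
  have hm0 : (0:ℝ) < m := by exact_mod_cast hm1
  have ham : a ≤ m := le_trans (Nat.le_ceil a) (by exact_mod_cast le_max_right 1 ⌈a⌉₊)
  set p : ℕ → ℝ := fun j => x + (j:ℝ)/m * (t - x) with hp
  have hp0 : p 0 = x := by simp [hp]
  have hpm : p m = t := by simp only [hp, div_self hm0.ne', one_mul]; ring
  have hpin : ∀ j ≤ m, p j ∈ Set.Icc (0:ℝ) 1 := by
    intro j hj
    have h01 : (j:ℝ)/m ∈ Set.Icc (0:ℝ) 1 := by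
      constructor
      · positivity
      · rw [div_le_one hm0]; exact_mod_cast hj
    have := (convex_Icc (0:ℝ) 1).add_smul_sub_mem hx ht h01
    simpa [smul_eq_mul] using this
  have hstep : ∀ j < m, |p (j+1) - p j| ≤ δ := by
    intro j hj
    have : p (j+1) - p j = (t - x)/m := by simp [hp]; field_simp; ring
    rw [this, abs_div, abs_of_pos hm0, div_le_iff₀ hm0]
    calc |t - x| = a * δ := by rw [ha]; field_simp
    _ ≤ m * δ := by nlinarith
    _ = δ * m := by ring
  have htele : f t - f x = ∑ j ∈ Finset.range m, (f (p (j+1)) - f (p j)) := by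
    rw [Finset.sum_range_sub (fun j => f (p j)), hp0, hpm]
  have hω := moc_nonneg f hf hδ.le
  have hsum : |f t - f x| ≤ (m:ℝ) * modulusOfContinuity f δ := by
    rw [htele]
    calc |∑ j ∈ Finset.range m, (f (p (j+1)) - f (p j))|
        ≤ ∑ j ∈ Finset.range m, |f (p (j+1)) - f (p j)| := Finset.abs_sum_le_sum_abs _ _
      _ ≤ ∑ j ∈ Finset.range m, modulusOfContinuity f δ := by
          apply Finset.sum_le_sum
          intro j hj
          have hj' := Finset.mem_range.mp hj
          exact moc_pair f hf (hpin (j+1) hj') (hpin j (le_of_lt hj')) (hstep j hj')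
      _ = (m:ℝ) * modulusOfContinuity f δ := by simp [mul_comm]
  have hma : (m:ℝ) ≤ 1 + a^2 := by
    rcases le_or_gt a 1 with h | h
    · have : ⌈a⌉₊ ≤ 1 := Nat.ceil_le.mpr (by simpa using h)
      have : m = 1 := by omega
      rw [this]; push_cast; nlinarith
    · have h1 : 1 ≤ ⌈a⌉₊ := Nat.one_le_ceil_iff.mpr (by linarith)
      have : m = ⌈a⌉₊ := by omega
      rw [this]
      have := Nat.ceil_lt_add_one ha0
      nlinarith
  have haa : ((t - x)/δ)^2 = a^2 := by
    rw [ha, div_pow, div_pow, sq_abs]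
  rw [haa]
  calc |f t - f x| ≤ (m:ℝ) * modulusOfContinuity f δ := hsum
  _ ≤ (1 + a^2) * modulusOfContinuity f δ := by nlinarith

set_option maxHeartbeats 1000000 in
theorem stancu_upper_estimate (α β : ℝ) (hα : 0 ≤ α) (hαβ : α ≤ β)
    (f : ℝ → ℝ) (hf : ContinuousOn f (Set.Icc 0 1)) :
    ∃ c > (0 : ℝ), ∀ n : ℕ, 1 ≤ n → ∀ x ∈ Set.Icc (0 : ℝ) 1,
      |bernsteinStancu n α β f x - f x|
        ≤ c * modulusOfContinuity f ((n : ℝ) ^ (-(1 / 2 : ℝ))) := by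
  have hβ0 : 0 ≤ β := le_trans hα hαβ
  refine ⟨2 + 2*β^2, by positivity, ?_⟩
  intro n hn x hx
  set δ : ℝ := (n:ℝ) ^ (-(1/2 : ℝ)) with hδdef
  have hn1 : (1:ℝ) ≤ n := by exact_mod_cast hn
  have hn0 : (0:ℝ) < n := by linarith
  have hδpos : 0 < δ := Real.rpow_pos_of_pos hn0 _
  have hδsq : δ^2 = ((n:ℝ))⁻¹ := by
    rw [hδdef, ← Real.rpow_natCast ((n:ℝ) ^ (-(1/2 : ℝ))) 2, ← Real.rpow_mul hn0.le]
    norm_num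
    exact Real.rpow_neg_one _
  set ω := modulusOfContinuity f δ with hωdef
  have hω0 : 0 ≤ ω := moc_nonneg f hf hδpos.le
  clear_value ω
  have hnβ : (0:ℝ) < (n:ℝ) + β := by linarith
  set T : ℕ → ℝ := fun k => ((k:ℝ) + α) / ((n:ℝ) + β) with hT
  have hTmem : ∀ k ∈ Finset.range (n+1), T k ∈ Set.Icc (0:ℝ) 1 := by
    intro k hk
    have hk' : (k:ℝ) ≤ n := by exact_mod_cast Nat.lt_succ_iff.mp (Finset.mem_range.mp hk)
    constructor
    · apply div_nonneg _ hnβ.le; positivity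
    · rw [div_le_one hnβ]; linarith
  set S : ℝ := ∑ k ∈ Finset.range (n+1), bernsteinBasis n k x * (T k - x)^2 with hS
  clear_value T
  have hS0 : 0 ≤ S := by
    rw [hS]
    apply Finset.sum_nonneg
    intro k _
    exact mul_nonneg (bb_nonneg n k hx) (sq_nonneg _)
  clear_value S
  -- variance bound
  have hB2 : (α - β*x)^2 ≤ β^2 := by
    have hu0 : 0 ≤ β*x := mul_nonneg hβ0 hx.1
    have hu1 : β*x ≤ β := by nlinarith [hx.2]
    nlinarith [mul_nonneg (show (0:ℝ) ≤ β - (α - β*x) by linarith)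
      (show (0:ℝ) ≤ β + (α - β*x) by linarith)]
  have hS1 : S * ((n:ℝ)+β)^2 ≤ 2*((n:ℝ)*x*(1-x)) + 2*β^2 := by
    have hTk : ∀ k : ℕ, (T k - x) * ((n:ℝ)+β) = (((k:ℝ) - n*x) + (α - β*x)) := by
      intro k; rw [hT]; field_simp; ring
    calc S * ((n:ℝ)+β)^2
        = ∑ k ∈ Finset.range (n+1),
            bernsteinBasis n k x * (((k:ℝ) - n*x) + (α - β*x))^2 := by
          rw [hS, Finset.sum_mul]
          apply Finset.sum_congr rfl
          intro k _
          rw [← hTk k]; ring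
      _ ≤ ∑ k ∈ Finset.range (n+1),
            (2 * (bernsteinBasis n k x * ((k:ℝ) - n*x)^2) + 2*β^2 * bernsteinBasis n k x) := by
          apply Finset.sum_le_sum
          intro k _
          have hb := bb_nonneg n k hx
          nlinarith [sq_nonneg (((k:ℝ) - n*x) - (α - β*x)), sq_nonneg ((k:ℝ) - n*x)]
      _ = 2*((n:ℝ)*x*(1-x)) + 2*β^2 := by
          rw [Finset.sum_add_distrib, ← Finset.mul_sum, ← Finset.mul_sum, bb_var, bb_sum]
          ring
  have hnS : (n:ℝ) * S ≤ 1/2 + 2*β^2 := by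
    clear hS hδsq hδdef hωdef hTmem hf hT
    have hxx : (n:ℝ)*x*(1-x) ≤ (n:ℝ)/4 := by
      nlinarith [mul_nonneg hn0.le (sq_nonneg (1 - 2*x))]
    have h1 : S * (n:ℝ)^2 ≤ (n:ℝ)/2 + 2*β^2 := by
      have := mul_le_mul_of_nonneg_left
        (show (n:ℝ)^2 ≤ ((n:ℝ)+β)^2 by nlinarith) hS0
      nlinarith
    have h2 : 0 ≤ (n:ℝ) * (1/2 + 2*β^2 - (n:ℝ)*S) := by
      nlinarith [mul_nonneg (show (0:ℝ) ≤ (n:ℝ) - 1 by linarith) (sq_nonneg β)]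
    nlinarith [h2, hn0]
  -- main estimate
  have hdiff : bernsteinStancu n α β f x - f x
      = ∑ k ∈ Finset.range (n+1), bernsteinBasis n k x * (f (T k) - f x) := by
    simp only [mul_sub, Finset.sum_sub_distrib]
    rw [← Finset.sum_mul, bb_sum, one_mul, bernsteinStancu, hT]
  rw [hdiff]
  have hinv : ∀ k : ℕ, ((T k - x)/δ)^2 = (n:ℝ) * (T k - x)^2 := by
    intro k
    rw [div_pow, hδsq, div_eq_mul_inv, inv_inv]
    ring
  calc |∑ k ∈ Finset.range (n+1), bernsteinBasis n k x * (f (T k) - f x)|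
      ≤ ∑ k ∈ Finset.range (n+1), |bernsteinBasis n k x * (f (T k) - f x)| :=
        Finset.abs_sum_le_sum_abs _ _
    _ ≤ ∑ k ∈ Finset.range (n+1),
          (bernsteinBasis n k x * ω + (bernsteinBasis n k x * (T k - x)^2) * ((n:ℝ) * ω)) := by
        apply Finset.sum_le_sum
        intro k hk
        have hb := bb_nonneg n k hx
        rw [abs_mul, abs_of_nonneg hb]
        have hk2 := moc_key f hf hδpos hx (hTmem k hk)
        rw [← hωdef] at hk2
        calc bernsteinBasis n k x * |f (T k) - f x|
            ≤ bernsteinBasis n k x * ((1 + ((T k - x)/δ)^2) * ω) :=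
              mul_le_mul_of_nonneg_left hk2 hb
          _ = bernsteinBasis n k x * ω + (bernsteinBasis n k x * (T k - x)^2) * ((n:ℝ) * ω) := by
              rw [hinv k]; ring
    _ = 1 * ω + S * ((n:ℝ) * ω) := by
        rw [Finset.sum_add_distrib, ← Finset.sum_mul, ← Finset.sum_mul, bb_sum, hS]
    _ = (1 + (n:ℝ)*S) * ω := by ring
    _ ≤ (2 + 2*β^2) * ω := by
        apply mul_le_mul_of_nonneg_right _ hω0
        linarith only [hnS]
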